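/- Specific performance (cross inequality): fix ε ≥ 0 and environments i, j ∈ {1,…,N} with j ≠ i. For every CAL optimizer (π*_1,…,π*_N,π*_c) ∈ S^CAL(ε), one has V_{e_i}(π*_i) ≤ V_{e_i}(π*_j), where V_{e_i}(π) := ‖Ψᵀ μ^i_π − Ψᵀ μ^i_{π^{E_i}}‖₁. -/

import Mathlib

open scoped BigOperators

variable {S A : Type*}

/-- A stationary policy: nonnegative entries with unit row sums. -/
def IsPolicy [Fintype A] (π : S → A → ℝ) : Prop :=
  (∀ s a, 0 ≤ π s a) ∧ ∀ s, ∑ a, π s a = 1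

/-- A transition kernel: nonnegative entries with unit row sums. -/
def IsKernel [Fintype S] (P : S × A → S → ℝ) : Prop :=
  (∀ p s', 0 ≤ P p s') ∧ ∀ p, ∑ s', P p s' = 1

/-- An initial distribution. -/
def IsInitDist [Fintype S] (ν : S → ℝ) : Prop :=
  (∀ s, 0 ≤ ν s) ∧ ∑ s, ν s = 1

/-- Induced state transition matrix `P_π(s,s') = Σ_a π(s,a) P((s,a),s')`. -/
noncomputable def polMatrix [Fintype A] (P : S × A → S → ℝ) (π : S → A → ℝ) :
    Matrix S S ℝ :=
  Matrix.of fun s s' => ∑ a, π s a * P (s, a) s'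

/-- Discounted state distribution `ρ_π(s) = Σ_t γ^t ((P_πᵀ)^t ν)(s)`. -/
noncomputable def stateDist [Fintype S] [Fintype A] [DecidableEq S]
    (γ : ℝ) (ν : S → ℝ) (P : S × A → S → ℝ) (π : S → A → ℝ) (s : S) : ℝ :=
  ∑' t : ℕ, γ ^ t * (((polMatrix P π).transpose ^ t).mulVec ν s)

/-- Discounted occupation measure `μ_π(s,a) = π(s,a) ρ_π(s)`. -/
noncomputable def occ [Fintype S] [Fintype A] [DecidableEq S]
    (γ : ℝ) (ν : S → ℝ) (P : S × A → S → ℝ) (π : S → A → ℝ) (s : S) (a : A) : ℝ :=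
  π s a * stateDist γ ν P π s

/-- `‖Ψᵀ μ^i_π − Ψᵀ μ^i_{π^{E_i}}‖₁`: the worst-case cost discrepancy of policy `π`
with respect to the expert in environment `i`. -/
noncomputable def discrep {N nc : ℕ} [Fintype S] [Fintype A] [DecidableEq S]
    (γ : ℝ) (ν : S → ℝ) (P : Fin N → S × A → S → ℝ)
    (πE : Fin N → S → A → ℝ) (Ψ : S × A → Fin nc → ℝ)
    (i : Fin N) (π : S → A → ℝ) : ℝ :=
  ∑ j, |∑ p : S × A, Ψ p j *
    (occ γ ν (P i) π p.1 p.2 - occ γ ν (P i) (πE i) p.1 p.2)|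

/-- The CAL objective `Σ_i ‖Ψᵀ μ^i_{π_i} − Ψᵀ μ^i_{π^{E_i}}‖₁`. -/
noncomputable def calObj {N nc : ℕ} [Fintype S] [Fintype A] [DecidableEq S]
    (γ : ℝ) (ν : S → ℝ) (P : Fin N → S × A → S → ℝ)
    (πE : Fin N → S → A → ℝ) (Ψ : S × A → Fin nc → ℝ)
    (q : (Fin N → S → A → ℝ) × (S → A → ℝ)) : ℝ :=
  ∑ i, discrep γ ν P πE Ψ i (q.1 i)

/-- The CAL feasibility set `Φ(ε)`: tuples `(π_1,…,π_N,π_c)` of stationary policies with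
`max_{(s,a)} |π_i(s,a) − π_c(s,a)| ≤ ε` for all `i`. -/
def calFeas {N : ℕ} [Fintype A] (ε : ℝ) :
    Set ((Fin N → S → A → ℝ) × (S → A → ℝ)) :=
  {q | (∀ i, IsPolicy (q.1 i)) ∧ IsPolicy q.2 ∧
    ∀ i s a, |q.1 i s a - q.2 s a| ≤ ε}

/-- The CAL optimizer set `S^CAL(ε)`. -/
noncomputable def SCAL {N nc : ℕ} [Fintype S] [Fintype A] [DecidableEq S]
    (γ : ℝ) (ν : S → ℝ) (P : Fin N → S × A → S → ℝ)
    (πE : Fin N → S → A → ℝ) (Ψ : S × A → Fin nc → ℝ) (ε : ℝ) :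
    Set ((Fin N → S → A → ℝ) × (S → A → ℝ)) :=
  {q | q ∈ calFeas ε ∧ ∀ q' ∈ calFeas ε,
    calObj γ ν P πE Ψ q ≤ calObj γ ν P πE Ψ q'}

/-- The decoupled optimizer set `S^dec_i`. -/
noncomputable def Sdec {N nc : ℕ} [Fintype S] [Fintype A] [DecidableEq S]
    (γ : ℝ) (ν : S → ℝ) (P : Fin N → S × A → S → ℝ)
    (πE : Fin N → S → A → ℝ) (Ψ : S × A → Fin nc → ℝ) (i : Fin N) :
    Set (S → A → ℝ) :=
  {π | IsPolicy π ∧ ∀ π', IsPolicy π' →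
    discrep γ ν P πE Ψ i π ≤ discrep γ ν P πE Ψ i π'}

/-- The centralized optimizer set `S^cen`. -/
noncomputable def Scen {N nc : ℕ} [Fintype S] [Fintype A] [DecidableEq S]
    (γ : ℝ) (ν : S → ℝ) (P : Fin N → S × A → S → ℝ)
    (πE : Fin N → S → A → ℝ) (Ψ : S × A → Fin nc → ℝ) :
    Set (S → A → ℝ) :=
  {π | IsPolicy π ∧ ∀ π', IsPolicy π' →
    (∑ i, discrep γ ν P πE Ψ i π) ≤ ∑ i, discrep γ ν P πE Ψ i π'}

/-- specific performance, cross inequality: for `ε ≥ 0` and environments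
`i ≠ j`, any CAL optimizer `(π*_1,…,π*_N,π*_c) ∈ S^CAL(ε)` satisfies
`V_{e_i}(π*_i) ≤ V_{e_i}(π*_j)`. -/
theorem stmt10 [Fintype S] [Fintype A] [Nonempty S] [Nonempty A] [DecidableEq S]
    {N nc : ℕ}
    (γ : ℝ) (hγ : γ ∈ Set.Ioo (0 : ℝ) 1)
    (ν : S → ℝ) (hν : IsInitDist ν)
    (P : Fin N → S × A → S → ℝ) (hP : ∀ i, IsKernel (P i))
    (πE : Fin N → S → A → ℝ) (hπE : ∀ i, IsPolicy (πE i))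
    (Ψ : S × A → Fin nc → ℝ)
    (ε : ℝ) (hε : 0 ≤ ε) (i j : Fin N) (hij : j ≠ i)
    (q : (Fin N → S → A → ℝ) × (S → A → ℝ)) (hq : q ∈ SCAL γ ν P πE Ψ ε) :
    discrep γ ν P πE Ψ i (q.1 i) ≤ discrep γ ν P πE Ψ i (q.1 j) := by
  obtain ⟨⟨hpol, hpc, hcons⟩, hopt⟩ := hq
  set q' : (Fin N → S → A → ℝ) × (S → A → ℝ) :=
    (Function.update q.1 i (q.1 j), q.2) with hq'
  have hfeas : q' ∈ calFeas ε := by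
    refine ⟨?_, hpc, ?_⟩
    · intro k
      by_cases hk : k = i
      · subst hk; simpa [hq'] using hpol j
      · simpa [hq', Function.update_of_ne hk] using hpol k
    · intro k s a
      by_cases hk : k = i
      · subst hk; simpa [hq'] using hcons j s a
      · simpa [hq', Function.update_of_ne hk] using hcons k s a
  have h := hopt q' hfeas
  unfold calObj at h
  rw [← Finset.sum_erase_add _ _ (Finset.mem_univ i),
      ← Finset.sum_erase_add _ _ (Finset.mem_univ i)] at h
  have hsame : ∑ k ∈ Finset.univ.erase i, discrep γ ν P πE Ψ k (q.1 k)
      = ∑ k ∈ Finset.univ.erase i, discrep γ ν P πE Ψ k (q'.1 k) := by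
    refine Finset.sum_congr rfl fun k hk => ?_
    rw [hq']
    simp [Function.update_of_ne (Finset.ne_of_mem_erase hk)]
  rw [hsame] at h
  simp only [hq', Function.update_self] at h
  linarith
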